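/- In the cocycle setting, let A = lim_{n→∞} (1/n)∫_X d(y, a_n(x)y) dμ(x). Then for μ-almost every x ∈ X, lim_{n→∞} (1/n)·d(y, a_n(x)y) = A. -/

import Mathlib

open Set Filter MeasureTheory

/-- A geodesic path of length `l`: an isometric map from `[0, l] ⊆ ℝ` into `Y`. -/
def IsGeodesicPath {Y : Type*} [MetricSpace Y] (l : ℝ) (γ : ℝ → Y) : Prop :=
  ∀ s ∈ Set.Icc (0:ℝ) l, ∀ t ∈ Set.Icc (0:ℝ) l, dist (γ s) (γ t) = |s - t|

/-- A geodesic path joining `x` to `y`, parametrized on `[0, dist x y]`. -/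
def IsGeodesicFromTo {Y : Type*} [MetricSpace Y] (x y : Y) (γ : ℝ → Y) : Prop :=
  IsGeodesicPath (dist x y) γ ∧ γ 0 = x ∧ γ (dist x y) = y

/-- A geodesic space: every two points are joined by a geodesic path. -/
def GeodesicSpace (Y : Type*) [MetricSpace Y] : Prop :=
  ∀ x y : Y, ∃ γ : ℝ → Y, IsGeodesicFromTo x y γ

/-- `m` is a midpoint of a geodesic segment from `x` to `y`. -/
def IsMidpointOf {Y : Type*} [MetricSpace Y] (x y m : Y) : Prop :=
  ∃ γ : ℝ → Y, IsGeodesicFromTo x y γ ∧ γ (dist x y / 2) = m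

/-- `p` belongs to a geodesic segment `[x, y]`. -/
def OnGeodesicSegment {Y : Type*} [MetricSpace Y] (x y p : Y) : Prop :=
  ∃ γ : ℝ → Y, IsGeodesicFromTo x y γ ∧ ∃ t ∈ Set.Icc (0:ℝ) (dist x y), γ t = p

/-- The modulus of convexity `δ_Y(a, r, ε)` (infimum over the empty set taken to be `1`). -/
noncomputable def convMod (Y : Type*) [MetricSpace Y] (a : Y) (r ε : ℝ) : ℝ :=
  sInf ({1} ∪ {u : ℝ | ∃ x y m : Y, dist a x ≤ r ∧ dist a y ≤ r ∧ ε * r ≤ dist x y ∧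
    IsMidpointOf x y m ∧ u = 1 - dist a m / r})

/-- `Y` is weakly uniformly convex: `δ_Y(a, r, ε) > 0` for all `a ∈ Y`, `r > 0`, `ε ∈ (0, 2]`. -/
def WeaklyUniformlyConvex (Y : Type*) [MetricSpace Y] : Prop :=
  ∀ (a : Y) (r ε : ℝ), 0 < r → ε ∈ Set.Ioc (0:ℝ) 2 → 0 < convMod Y a r ε

/-- Condition (1): for every `a ∈ Y`, `ε > 0` there is `s > 0` with `inf_{r ≥ s} δ_Y(a,r,ε) > 0`. -/
def CondOne (Y : Type*) [MetricSpace Y] : Prop :=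
  ∀ (a : Y) (ε : ℝ), 0 < ε → ∃ s > (0:ℝ), 0 < sInf {u : ℝ | ∃ r ≥ s, u = convMod Y a r ε}

/-- Busemann convexity. -/
def BusemannConvex (Y : Type*) [MetricSpace Y] : Prop :=
  ∀ (l₁ l₂ : ℝ) (γ₁ γ₂ : ℝ → Y), 0 ≤ l₁ → 0 ≤ l₂ →
    IsGeodesicPath l₁ γ₁ → IsGeodesicPath l₂ γ₂ → γ₁ 0 = γ₂ 0 →
    ∀ t ∈ Set.Icc (0:ℝ) 1, dist (γ₁ (t * l₁)) (γ₂ (t * l₂)) ≤ t * dist (γ₁ l₁) (γ₂ l₂)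

/-- A geodesic ray: an isometric map from `[0, ∞)` into `Y`. -/
def IsGeodesicRay {Y : Type*} [MetricSpace Y] (γ : ℝ → Y) : Prop :=
  ∀ s t : ℝ, 0 ≤ s → 0 ≤ t → dist (γ s) (γ t) = |s - t|

set_option linter.unusedSectionVars false
set_option linter.unusedVariables false

namespace KingmanAux

variable {X : Type*} [MeasurableSpace X] {μ : Measure X} {T : X → X}

/-- Birkhoff sum. -/
noncomputable def bS (T : X → X) (g : X → ℝ) (n : ℕ) (x : X) : ℝ :=
  ∑ i ∈ Finset.range n, g (T^[i] x)

lemma bS_zero (T : X → X) (g : X → ℝ) (x : X) : bS T g 0 x = 0 := by simp [bS]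

lemma bS_one (T : X → X) (g : X → ℝ) (x : X) : bS T g 1 x = g x := by simp [bS]

lemma bS_succ_left (T : X → X) (g : X → ℝ) (n : ℕ) (x : X) :
    bS T g (n + 1) x = g x + bS T g n (T x) := by
  simp only [bS]
  rw [Finset.sum_range_succ']
  simp [Function.iterate_succ_apply, add_comm]

lemma bS_add (T : X → X) (g : X → ℝ) (m n : ℕ) (x : X) :
    bS T g (m + n) x = bS T g m x + bS T g n (T^[m] x) := by
  simp only [bS]
  rw [Finset.sum_range_add]
  congr 1
  refine Finset.sum_congr rfl fun i _ => ?_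
  rw [add_comm m i, Function.iterate_add_apply]

lemma bS_nonneg (T : X → X) {g : X → ℝ} (hg : ∀ x, 0 ≤ g x) (n : ℕ) (x : X) :
    0 ≤ bS T g n x :=
  Finset.sum_nonneg fun _ _ => hg _

lemma bS_measurable (hT : Measurable T) {g : X → ℝ} (hg : Measurable g) (n : ℕ) :
    Measurable (bS T g n) :=
  Finset.measurable_sum _ fun i _ => hg.comp (hT.iterate i)

lemma integrable_comp_iterate (hT : MeasurePreserving T μ μ) {g : X → ℝ}
    (hgm : Measurable g) (hg : Integrable g μ) (i : ℕ) :
    Integrable (fun x => g (T^[i] x)) μ :=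
  ((hT.iterate i).integrable_comp hg.aestronglyMeasurable).2 hg

lemma bS_integrable (hT : MeasurePreserving T μ μ) {g : X → ℝ}
    (hgm : Measurable g) (hg : Integrable g μ) (n : ℕ) :
    Integrable (bS T g n) μ := by
  have : (bS T g n) = fun x => ∑ i ∈ Finset.range n, g (T^[i] x) := rfl
  rw [this]
  exact integrable_finset_sum _ fun i _ => integrable_comp_iterate hT hgm hg i

lemma integral_comp_iterate (hT : MeasurePreserving T μ μ) {g : X → ℝ}
    (hgm : Measurable g) (i : ℕ) :
    ∫ x, g (T^[i] x) ∂μ = ∫ x, g x ∂μ := by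
  conv_rhs => rw [← (hT.iterate i).map_eq]
  rw [integral_map ((hT.iterate i).measurable.aemeasurable) hgm.aestronglyMeasurable]

lemma bS_integral (hT : MeasurePreserving T μ μ) {g : X → ℝ}
    (hgm : Measurable g) (hg : Integrable g μ) (n : ℕ) :
    ∫ x, bS T g n x ∂μ = n * ∫ x, g x ∂μ := by
  have : ∫ x, bS T g n x ∂μ = ∑ i ∈ Finset.range n, ∫ x, g (T^[i] x) ∂μ := by
    rw [← integral_finset_sum]
    · rfl
    · exact fun i _ => integrable_comp_iterate hT hgm hg i
  rw [this]
  simp [integral_comp_iterate hT hgm, Finset.sum_const]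

/-- running maximum of Birkhoff sums `bS 0, ..., bS N` (note `bS 0 = 0`). -/
noncomputable def mS (T : X → X) (g : X → ℝ) : ℕ → X → ℝ
  | 0 => fun _ => 0
  | (N + 1) => fun x => max (mS T g N x) (bS T g (N + 1) x)

lemma mS_nonneg (T : X → X) (g : X → ℝ) (N : ℕ) (x : X) : 0 ≤ mS T g N x := by
  induction N with
  | zero => simp [mS]
  | succ N ih => exact le_trans ih (le_max_left _ _)

lemma mS_mono (T : X → X) (g : X → ℝ) (N : ℕ) (x : X) :
    mS T g N x ≤ mS T g (N + 1) x := le_max_left _ _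

lemma bS_le_mS (T : X → X) (g : X → ℝ) {n N : ℕ} (h : n ≤ N) (x : X) :
    bS T g n x ≤ mS T g N x := by
  induction N with
  | zero => simpa [Nat.le_zero.1 h, bS_zero] using mS_nonneg T g 0 x
  | succ N ih =>
    rcases Nat.lt_or_ge n (N + 1) with h' | h'
    · exact le_trans (ih (Nat.lt_succ_iff.1 h')) (le_max_left _ _)
    · have : n = N + 1 := le_antisymm h h'
      subst this
      exact le_max_right _ _

lemma mS_exists (T : X → X) (g : X → ℝ) {N : ℕ} {x : X} (h : 0 < mS T g N x) :
    ∃ n, 1 ≤ n ∧ n ≤ N ∧ mS T g N x ≤ bS T g n x := by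
  induction N with
  | zero => simp [mS] at h
  | succ N ih =>
    rcases le_or_gt (mS T g (N+1) x) (bS T g (N+1) x) with h' | h'
    · exact ⟨N + 1, by omega, le_refl _, h'⟩
    · have hm : mS T g (N + 1) x = mS T g N x := by
        have : mS T g (N+1) x = max (mS T g N x) (bS T g (N+1) x) := rfl
        rw [this] at h' ⊢
        rcases max_cases (mS T g N x) (bS T g (N+1) x) with ⟨h1, _⟩ | ⟨h1, h2⟩
        · exact h1
        · exfalso; rw [h1] at h'; exact lt_irrefl _ h'
      rw [hm] at h ⊢
      obtain ⟨n, h1, h2, h3⟩ := ih h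
      exact ⟨n, h1, h2.trans (Nat.le_succ N), h3⟩

lemma mS_measurable (hT : Measurable T) {g : X → ℝ} (hg : Measurable g) (N : ℕ) :
    Measurable (mS T g N) := by
  induction N with
  | zero => exact measurable_const
  | succ N ih => exact ih.max (bS_measurable hT hg (N+1))

lemma mS_integrable (hT : MeasurePreserving T μ μ) {g : X → ℝ}
    (hgm : Measurable g) (hg : Integrable g μ) (N : ℕ) :
    Integrable (mS T g N) μ := by
  induction N with
  | zero => exact integrable_zero X ℝ μ
  | succ N ih =>
    have : mS T g (N + 1) = fun x => mS T g N x ⊔ bS T g (N+1) x := rfl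
    rw [this]
    exact ih.sup (bS_integrable hT hgm hg (N+1))

/-- Garsia's maximal ergodic lemma. -/
lemma garsia [IsProbabilityMeasure μ] (hT : MeasurePreserving T μ μ) {g : X → ℝ}
    (hgm : Measurable g) (hg : Integrable g μ) (N : ℕ) :
    0 ≤ ∫ x in {x | 0 < mS T g N x}, g x ∂μ := by
  set E : Set X := {x | 0 < mS T g N x} with hE
  have hEm : MeasurableSet E := measurableSet_lt measurable_const (mS_measurable hT.measurable hgm N)
  -- key pointwise inequality on E
  have key : ∀ x ∈ E, mS T g N x - mS T g N (T x) ≤ g x := by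
    intro x hx
    obtain ⟨n, h1, h2, h3⟩ := mS_exists T g hx
    obtain ⟨k, rfl⟩ : ∃ k, n = k + 1 := ⟨n - 1, by omega⟩
    have : bS T g (k + 1) x = g x + bS T g k (T x) := bS_succ_left T g k x
    have h4 : bS T g k (T x) ≤ mS T g N (T x) := bS_le_mS T g (by omega) (T x)
    linarith
  have hMint := mS_integrable hT hgm hg N
  have hMTint : Integrable (fun x => mS T g N (T x)) μ :=
    (hT.integrable_comp hMint.aestronglyMeasurable).2 hMint
  have step1 : ∫ x in E, (mS T g N x - mS T g N (T x)) ∂μ ≤ ∫ x in E, g x ∂μ := by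
    apply setIntegral_mono_on (hMint.sub hMTint).integrableOn hg.integrableOn hEm
    intro x hx
    exact key x hx
  have step2 : ∫ x in E, mS T g N x ∂μ = ∫ x, mS T g N x ∂μ := by
    rw [← integral_indicator hEm]
    congr 1
    funext x
    by_cases hx : x ∈ E
    · simp [Set.indicator_of_mem hx]
    · have : mS T g N x = 0 := le_antisymm (not_lt.1 hx) (mS_nonneg T g N x)
      simp [Set.indicator_of_notMem hx, this]
  have step3 : ∫ x in E, mS T g N (T x) ∂μ ≤ ∫ x, mS T g N (T x) ∂μ := by
    apply setIntegral_le_integral hMTint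
    exact Filter.Eventually.of_forall fun x => mS_nonneg T g N (T x)
  have step4 : ∫ x, mS T g N (T x) ∂μ = ∫ x, mS T g N x ∂μ := by
    conv_rhs => rw [← hT.map_eq]
    rw [integral_map hT.measurable.aemeasurable (mS_measurable hT.measurable hgm N).aestronglyMeasurable]
  have step5 : ∫ x in E, (mS T g N x - mS T g N (T x)) ∂μ
      = ∫ x in E, mS T g N x ∂μ - ∫ x in E, mS T g N (T x) ∂μ :=
    integral_sub hMint.integrableOn hMTint.integrableOn
  linarith



lemma ofReal_rat_eq (q : ℚ) : (Real.toNNReal (q:ℝ) : ENNReal) = ENNReal.ofReal (q:ℝ) := rfl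

/-- From a strict inequality in `ℝ≥0∞` extract two rationals in between. -/
lemma exists_two_rat_btwn {a b : ENNReal} (h : a < b) :
    ∃ q1 q2 : ℚ, 0 ≤ (q1:ℝ) ∧ (q1:ℝ) < (q2:ℝ) ∧ a < ENNReal.ofReal (q1:ℝ) ∧
      ENNReal.ofReal (q2:ℝ) < b := by
  obtain ⟨q1, hq1nn, h1, h2⟩ := ENNReal.lt_iff_exists_rat_btwn.1 h
  obtain ⟨q2, hq2nn, h3, h4⟩ := ENNReal.lt_iff_exists_rat_btwn.1 h2
  refine ⟨q1, q2, by exact_mod_cast hq1nn, ?_, by rwa [ofReal_rat_eq] at h1, by rwa [ofReal_rat_eq] at h4⟩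
  have h3' : ENNReal.ofReal (q1:ℝ) < ENNReal.ofReal (q2:ℝ) := by
    rwa [ofReal_rat_eq, ofReal_rat_eq] at h3
  have hq2pos : (0:ℝ) < q2 := by
    by_contra hc
    push_neg at hc
    rw [ENNReal.ofReal_eq_zero.2 hc] at h3'
    exact (not_lt.2 zero_le) h3'
  exact (ENNReal.ofReal_lt_ofReal_iff hq2pos).1 h3'

/-- frequently transported along `n ↦ n + 1`. -/
lemma frequently_of_succ {p : ℕ → Prop} (h : ∃ᶠ n in atTop, p (n + 1)) : ∃ᶠ n in atTop, p n :=
  (tendsto_add_atTop_nat 1).frequently h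

lemma kingman_liminf_lower [IsProbabilityMeasure μ] (hT : Ergodic T μ) {f : ℕ → X → ℝ}
    (hf0 : ∀ x, f 0 x = 0) (hnn : ∀ n x, 0 ≤ f n x)
    (hsub : ∀ m n x, f (m + n) x ≤ f m x + f n (T^[m] x))
    (hfm : ∀ n, Measurable (f n)) (hint : Integrable (f 1) μ)
    {A : ℝ} (hA : Tendsto (fun n : ℕ => (∫ x, f n x ∂μ) / n) atTop (nhds A)) :
    ∀ᵐ x ∂μ, ENNReal.ofReal A ≤ atTop.liminf fun n => ENNReal.ofReal (f n x / n) := by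
  have hTm := hT.toMeasurePreserving
  -- f n ≤ Birkhoff sums of f 1
  have hfle : ∀ n x, f n x ≤ bS T (f 1) n x := by
    intro n
    induction n with
    | zero => intro x; rw [hf0 x, bS_zero]
    | succ n ih =>
      intro x
      have h1 := hsub n 1 x
      have h2 : bS T (f 1) (n + 1) x = bS T (f 1) n x + f 1 (T^[n] x) := by
        rw [bS_add T (f 1) n 1 x, bS_one]
      rw [h2]
      exact h1.trans (add_le_add (ih x) le_rfl)
  have hfint : ∀ n, Integrable (f n) μ := by
    intro n
    refine Integrable.mono' (bS_integrable hTm (hfm 1) hint n) (hfm n).aestronglyMeasurable ?_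
    exact Eventually.of_forall fun x => by
      rw [Real.norm_of_nonneg (hnn n x)]; exact hfle n x
  set L : X → ENNReal := fun x => atTop.liminf fun n => ENNReal.ofReal (f n x / n) with hL
  have hLmeas : Measurable L :=
    Measurable.liminf fun n => ENNReal.measurable_ofReal.comp ((hfm n).div_const _)
  -- pointwise : L x ≤ L (T x)
  have hLTle : ∀ x, L x ≤ L (T x) := by
    intro x
    by_contra hcon
    push_neg at hcon
    obtain ⟨q1, q2, hq1nn, hq12, hlt1, hlt2⟩ := exists_two_rat_btwn hcon
    -- frequently f n (T x) < q1 * n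
    have hfreq : ∃ᶠ n in atTop, ENNReal.ofReal (f n (T x) / n) < ENNReal.ofReal (q1:ℝ) :=
      frequently_lt_of_liminf_lt (h := hlt1)
    have hfreq2 : ∃ᶠ n in atTop, (1 ≤ n ∧ f n (T x) < (q1:ℝ) * n) := by
      refine (hfreq.and_eventually (eventually_ge_atTop 1)).mono ?_
      rintro n ⟨h1, h2⟩
      refine ⟨h2, ?_⟩
      have hn : (0:ℝ) < n := by exact_mod_cast h2
      have : f n (T x) / n < (q1:ℝ) := by
        by_contra hge
        push_neg at hge
        exact absurd (ENNReal.ofReal_le_ofReal hge) (not_le.2 h1)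
      calc f n (T x) = (f n (T x) / n) * n := by field_simp
        _ < (q1:ℝ) * n := by exact mul_lt_mul_of_pos_right this hn
    -- from subadditivity, frequently f (n+1) x ≤ q2 * (n+1)
    have hev : ∀ᶠ n : ℕ in atTop, f 1 x + (q1:ℝ) * n ≤ (q2:ℝ) * (n + 1) := by
      have h1 : Tendsto (fun n : ℕ => ((q2:ℝ) - q1) * n) atTop atTop := by
        apply Tendsto.const_mul_atTop (by linarith : (0:ℝ) < (q2:ℝ) - q1)
        exact tendsto_natCast_atTop_atTop
      filter_upwards [h1.eventually_ge_atTop (f 1 x - (q2:ℝ))] with n hn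
      nlinarith
    have hfreq3 : ∃ᶠ n in atTop,
        ENNReal.ofReal (f (n+1) x / (n+1)) ≤ ENNReal.ofReal (q2:ℝ) := by
      refine (hfreq2.and_eventually hev).mono ?_
      rintro n ⟨⟨hn1, hn2⟩, hn3⟩
      apply ENNReal.ofReal_le_ofReal
      have hsub1 := hsub 1 n x
      simp only [Function.iterate_one] at hsub1
      have hle : f (n + 1) x ≤ (q2:ℝ) * (n+1) := by
        have : f (1 + n) x ≤ f 1 x + f n (T x) := hsub1
        rw [add_comm 1 n] at this
        linarith
      have hpos : (0:ℝ) < (n:ℝ) + 1 := by positivity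
      rw [div_le_iff₀ hpos]
      exact_mod_cast hle
    have hfreq4 : ∃ᶠ n in atTop, ENNReal.ofReal (f n x / n) ≤ ENNReal.ofReal (q2:ℝ) := by
      apply frequently_of_succ (p := fun n => ENNReal.ofReal (f n x / n) ≤ ENNReal.ofReal (q2:ℝ))
      exact_mod_cast hfreq3
    have : L x ≤ ENNReal.ofReal (q2:ℝ) := liminf_le_of_frequently_le hfreq4
    exact absurd this (not_le.2 hlt2)
  -- a.e. invariance via truncation
  have htrunc : ∀ k : ℕ, (fun x => min (L x) (k : ENNReal)) =ᵐ[μ] (fun x => min (L (T x)) (k : ENNReal)) := by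
    intro k
    have hmeask : Measurable fun x => min (L x) (k : ENNReal) := hLmeas.min measurable_const
    have hle : (fun x => min (L x) (k : ENNReal)) ≤ᵐ[μ] fun x => min (L (T x)) (k : ENNReal) :=
      Eventually.of_forall fun x => min_le_min (hLTle x) le_rfl
    have hfin : ∫⁻ x, min (L x) (k : ENNReal) ∂μ ≠ ⊤ := by
      have h1 : ∫⁻ x, min (L x) (k : ENNReal) ∂μ ≤ ∫⁻ _, (k : ENNReal) ∂μ :=
        lintegral_mono fun x => min_le_right _ _
      rw [lintegral_const, measure_univ, mul_one] at h1
      exact ne_top_of_le_ne_top (ENNReal.natCast_ne_top k) h1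
    have hcomp : ∫⁻ x, min (L (T x)) (k : ENNReal) ∂μ = ∫⁻ x, min (L x) (k : ENNReal) ∂μ :=
      hTm.lintegral_comp hmeask
    exact ae_eq_of_ae_le_of_lintegral_le hle hfin
      (hmeask.comp hTm.measurable).aemeasurable hcomp.le
  have hLinv : (fun x => L (T x)) =ᵐ[μ] L := by
    have hall : ∀ᵐ x ∂μ, ∀ k : ℕ, min (L x) (k : ENNReal) = min (L (T x)) (k : ENNReal) :=
      ae_all_iff.2 htrunc
    filter_upwards [hall] with x hx
    by_contra hne
    have hlt : L x < L (T x) := (hLTle x).lt_of_ne fun h => hne h.symm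
    have hxfin : L x ≠ ⊤ := fun htop => (not_lt.2 le_top) (htop ▸ hlt)
    obtain ⟨k, hk⟩ := ENNReal.exists_nat_gt hxfin
    have h1 : min (L x) (k : ENNReal) = L x := min_eq_left hk.le
    have h2 : L x < min (L (T x)) (k : ENNReal) := lt_min hlt hk
    rw [hx k] at h1
    exact absurd h1 (ne_of_gt h2)
  obtain ⟨c, hc⟩ := hT.ae_eq_const_of_ae_eq_comp₀ hLmeas.nullMeasurable hLinv
  set I1 := ∫⁻ z, ENNReal.ofReal (f 1 z) ∂μ with hI1def
  have hI1fin : I1 ≠ ⊤ := by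
    rw [hI1def, ← ofReal_integral_eq_lintegral_ofReal hint (Eventually.of_forall (hnn 1))]
    exact ENNReal.ofReal_ne_top
  have hAc : ENNReal.ofReal A ≤ c := by
    by_contra hcon
    push_neg at hcon
    have hcfin : c ≠ ⊤ := ne_top_of_lt hcon
    set α := c.toReal with hαdef
    have hα0 : 0 ≤ α := ENNReal.toReal_nonneg
    have hA0 : 0 < A := by
      by_contra h
      push_neg at h
      rw [ENNReal.ofReal_eq_zero.2 h] at hcon
      exact (not_lt.2 zero_le) hcon
    have hαA : α < A := by
      have h := (ENNReal.toReal_lt_toReal hcfin ENNReal.ofReal_ne_top).2 hcon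
      rwa [ENNReal.toReal_ofReal hA0.le] at h
    set ε := (A - α) / 3 with hεdef
    have hε : 0 < ε := by rw [hεdef]; linarith
    have hαε : 0 ≤ α + ε := by linarith
    have hkey2 : α + 2 * ε < A := by rw [hεdef]; linarith
    have hcαε : c < ENNReal.ofReal (α + ε) := by
      conv_lhs => rw [← ENNReal.ofReal_toReal hcfin]
      exact (ENNReal.ofReal_lt_ofReal_iff (by linarith)).2 (by linarith)
    set E : ℕ → Set X := fun k => {z | ∀ n, 1 ≤ n → n ≤ k → (α + ε) * n < f n z} with hEdef
    have hEm : ∀ k, MeasurableSet (E k) := by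
      intro k
      have hEq : E k = ⋂ (n : ℕ), ⋂ (_ : 1 ≤ n), ⋂ (_ : n ≤ k), {z | (α + ε) * n < f n z} := by
        ext z
        simp [hEdef]
      rw [hEq]
      exact MeasurableSet.iInter fun n => MeasurableSet.iInter fun _ =>
        MeasurableSet.iInter fun _ => measurableSet_lt measurable_const (hfm n)
    have hEanti : Antitone E := fun k k' hkk' z hz n h1 h2 => hz n h1 (h2.trans hkk')
    have hEinter : μ (⋂ k, E k) = 0 := by
      have hae : ∀ᵐ x ∂μ, x ∉ ⋂ k, E k := by
        filter_upwards [hc] with x hx hmem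
        have hlt : L x < ENNReal.ofReal (α + ε) := by
          rw [hx]; exact hcαε
        have hfr : ∃ᶠ n in atTop, ENNReal.ofReal (f n x / n) < ENNReal.ofReal (α + ε) :=
          frequently_lt_of_liminf_lt (h := hlt)
        obtain ⟨n, hn1, hn2⟩ := (hfr.and_eventually (eventually_ge_atTop 1)).exists
        have hnpos : (0:ℝ) < n := by exact_mod_cast hn2
        have hdlt : f n x / n < α + ε := by
          by_contra hge
          push_neg at hge
          exact absurd (ENNReal.ofReal_le_ofReal hge) (not_le.2 hn1)
        have hflt : f n x < (α + ε) * n := by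
          rw [div_lt_iff₀ hnpos] at hdlt
          linarith [hdlt]
        have hxE : x ∈ E n := Set.mem_iInter.1 hmem n
        exact absurd (hxE n hn2 le_rfl) (not_lt.2 hflt.le)
      exact measure_eq_zero_iff_ae_notMem.2 hae
    set ν := μ.withDensity (fun z => ENNReal.ofReal (f 1 z)) with hνdef
    have hνfin : IsFiniteMeasure ν := isFiniteMeasure_withDensity hI1fin
    have hνtend : Tendsto (fun k => ν (E k)) atTop (nhds (ν (⋂ k, E k))) :=
      tendsto_measure_iInter_atTop (fun k => (hEm k).nullMeasurableSet) hEanti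
        ⟨0, measure_ne_top ν _⟩
    have hν0 : ν (⋂ k, E k) = 0 := withDensity_absolutelyContinuous μ _ hEinter
    obtain ⟨N₀, hN₀, hN₀1⟩ : ∃ N₀, ν (E N₀) < ENNReal.ofReal ε ∧ 1 ≤ N₀ := by
      rw [hν0] at hνtend
      have hev := hνtend.eventually_lt_const (ENNReal.ofReal_pos.2 hε)
      exact (hev.and (eventually_ge_atTop 1)).exists
    set Eb := E N₀ with hEbdef
    set Hr : ℕ → X → ℝ := fun j z => if j ≤ N₀ then f 1 z else Eb.indicator (f 1) z with hHrdef
    have hHrnn : ∀ j z, 0 ≤ Hr j z := by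
      intro j z
      rw [hHrdef]
      by_cases h : j ≤ N₀
      · simpa [h] using hnn 1 z
      · simp only [h, if_false]
        exact Set.indicator_nonneg (fun z _ => hnn 1 z) z
    have hHrm : ∀ j, Measurable (Hr j) := by
      intro j
      rw [hHrdef]
      by_cases h : j ≤ N₀
      · simpa [h] using hfm 1
      · simp only [h, if_false]
        exact (hfm 1).indicator (hEm N₀)
    -- the pointwise stopping-time bound
    have key : ∀ N x, f N x ≤ (α + ε) * N + ∑ i ∈ Finset.range N, Hr (N - i) (T^[i] x) := by
      intro N
      induction N using Nat.strong_induction_on with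
      | _ N ih =>
        intro x
        rcases Nat.eq_zero_or_pos N with rfl | hN
        · simp [hf0 x]
        by_cases hex : ∃ k, 1 ≤ k ∧ k ≤ N ∧ f k x ≤ (α + ε) * k
        · obtain ⟨k, hk1, hkN, hfk⟩ := hex
          have hdec : f N x ≤ f k x + f (N - k) (T^[k] x) := by
            have h := hsub k (N - k) x
            rwa [Nat.add_sub_cancel' hkN] at h
          have hIH := ih (N - k) (by omega) (T^[k] x)
          have hre : ∑ i ∈ Finset.range (N - k), Hr (N - k - i) (T^[i] (T^[k] x))
              = ∑ j ∈ Finset.Ico k N, Hr (N - j) (T^[j] x) := by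
            rw [Finset.sum_Ico_eq_sum_range]
            refine Finset.sum_congr rfl fun i _ => ?_
            have h1 : N - k - i = N - (k + i) := by omega
            have h2 : T^[i] (T^[k] x) = T^[k + i] x := by
              rw [add_comm k i, Function.iterate_add_apply]
            rw [h1, h2]
          have hsub2 : ∑ j ∈ Finset.Ico k N, Hr (N - j) (T^[j] x)
              ≤ ∑ j ∈ Finset.range N, Hr (N - j) (T^[j] x) := by
            rw [Finset.range_eq_Ico]
            refine Finset.sum_le_sum_of_subset_of_nonneg
              (Finset.Ico_subset_Ico (Nat.zero_le k) le_rfl) ?_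
            intro j _ _
            exact hHrnn _ _
          have hcast : ((N - k : ℕ) : ℝ) = (N : ℝ) - k := by
            rw [Nat.cast_sub hkN]
          calc f N x ≤ f k x + f (N - k) (T^[k] x) := hdec
            _ ≤ (α + ε) * k + ((α + ε) * (N - k : ℕ)
                + ∑ i ∈ Finset.range (N - k), Hr (N - k - i) (T^[i] (T^[k] x))) :=
                add_le_add hfk hIH
            _ ≤ (α + ε) * N + ∑ j ∈ Finset.range N, Hr (N - j) (T^[j] x) := by
                rw [hre, hcast]
                have := hsub2
                nlinarith [hsub2]
        · push_neg at hex
          have hHrN : Hr N x = f 1 x := by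
            rw [hHrdef]
            by_cases h : N ≤ N₀
            · simp [h]
            · have hxE : x ∈ Eb := by
                intro n h1 h2
                exact hex n h1 (by omega)
              simp only [h, if_false]
              exact Set.indicator_of_mem hxE _
          have hdec : f N x ≤ f 1 x + f (N - 1) (T x) := by
            have h := hsub 1 (N - 1) x
            rw [Nat.add_sub_cancel' hN] at h
            simpa using h
          have hIH := ih (N - 1) (by omega) (T x)
          have hre : ∑ i ∈ Finset.range (N - 1), Hr (N - 1 - i) (T^[i] (T x))
              = ∑ j ∈ Finset.Ico 1 N, Hr (N - j) (T^[j] x) := by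
            rw [Finset.sum_Ico_eq_sum_range]
            refine Finset.sum_congr rfl fun i _ => ?_
            have h1 : N - 1 - i = N - (1 + i) := by omega
            have h2 : T^[i] (T x) = T^[1 + i] x := by
              rw [add_comm 1 i, Function.iterate_add_apply, Function.iterate_one]
            rw [h1, h2]
          have hsplit : ∑ j ∈ Finset.range N, Hr (N - j) (T^[j] x)
              = Hr N x + ∑ j ∈ Finset.Ico 1 N, Hr (N - j) (T^[j] x) := by
            rw [Finset.range_eq_Ico, Finset.sum_eq_sum_Ico_succ_bot hN]
            simp
          have hcast : ((N - 1 : ℕ) : ℝ) = (N : ℝ) - 1 := by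
            rw [Nat.cast_sub hN]
            simp
          have hNc : (1:ℝ) ≤ (N:ℝ) := by exact_mod_cast hN
          rw [hsplit, hHrN]
          rw [hre, hcast] at hIH
          nlinarith [hdec, hIH]
    -- integrate the bound
    have hHrint : ∀ j, ∫⁻ z, ENNReal.ofReal (Hr j z) ∂μ ≤
        (if j ≤ N₀ then I1 else 0) + ENNReal.ofReal ε := by
      intro j
      by_cases h : j ≤ N₀
      · simp only [h, if_true]
        have : ∀ z, Hr j z = f 1 z := fun z => by rw [hHrdef]; simp [h]
        simp only [this]
        exact le_self_add
      · simp only [h, if_false, zero_add]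
        have heq : (fun z => ENNReal.ofReal (Hr j z))
            = Eb.indicator (fun z => ENNReal.ofReal (f 1 z)) := by
          funext z
          rw [hHrdef]
          simp only [h, if_false]
          by_cases hz : z ∈ Eb <;> simp [hz]
        calc ∫⁻ z, ENNReal.ofReal (Hr j z) ∂μ
            = ∫⁻ z, Eb.indicator (fun z => ENNReal.ofReal (f 1 z)) z ∂μ := by
              exact lintegral_congr fun z => congrFun heq z
          _ = ∫⁻ z in Eb, ENNReal.ofReal (f 1 z) ∂μ := lintegral_indicator (hEm N₀) _
          _ = ν Eb := (withDensity_apply _ (hEm N₀)).symm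
          _ ≤ ENNReal.ofReal ε := hN₀.le
    have hmain : ∀ N : ℕ, ENNReal.ofReal (∫ x, f N x ∂μ) ≤
        ENNReal.ofReal ((α + ε) * N) + (N₀ : ENNReal) * I1 + (N : ENNReal) * ENNReal.ofReal ε := by
      intro N
      rw [ofReal_integral_eq_lintegral_ofReal (hfint N) (Eventually.of_forall (hnn N))]
      have step1 : ∫⁻ x, ENNReal.ofReal (f N x) ∂μ ≤
          ∫⁻ x, (ENNReal.ofReal ((α + ε) * N)
            + ∑ i ∈ Finset.range N, ENNReal.ofReal (Hr (N - i) (T^[i] x))) ∂μ := by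
        apply lintegral_mono
        intro x
        calc ENNReal.ofReal (f N x)
            ≤ ENNReal.ofReal ((α + ε) * N + ∑ i ∈ Finset.range N, Hr (N - i) (T^[i] x)) :=
              ENNReal.ofReal_le_ofReal (key N x)
          _ = _ := by
              rw [ENNReal.ofReal_add (by positivity)
                  (Finset.sum_nonneg fun i _ => hHrnn _ _),
                ENNReal.ofReal_sum_of_nonneg (fun i _ => hHrnn _ _)]
      have step2 : ∫⁻ x, (ENNReal.ofReal ((α + ε) * N)
            + ∑ i ∈ Finset.range N, ENNReal.ofReal (Hr (N - i) (T^[i] x))) ∂μ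
          = ENNReal.ofReal ((α + ε) * N)
            + ∑ i ∈ Finset.range N, ∫⁻ x, ENNReal.ofReal (Hr (N - i) (T^[i] x)) ∂μ := by
        rw [lintegral_add_left measurable_const, lintegral_const, measure_univ, mul_one,
          lintegral_finset_sum]
        intro i _
        exact ENNReal.measurable_ofReal.comp ((hHrm _).comp (hTm.measurable.iterate i))
      have step3 : ∀ i, ∫⁻ x, ENNReal.ofReal (Hr (N - i) (T^[i] x)) ∂μ
          = ∫⁻ z, ENNReal.ofReal (Hr (N - i) z) ∂μ :=
        fun i => (hTm.iterate i).lintegral_comp (ENNReal.measurable_ofReal.comp (hHrm _))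
      have step4 : ∑ i ∈ Finset.range N, ∫⁻ z, ENNReal.ofReal (Hr (N - i) z) ∂μ ≤
          (N₀ : ENNReal) * I1 + (N : ENNReal) * ENNReal.ofReal ε := by
        have hcardle : ((Finset.range N).filter (fun i => N - i ≤ N₀)).card ≤ N₀ := by
          have hsubs : (Finset.range N).filter (fun i => N - i ≤ N₀) ⊆
              Finset.Ico (N - N₀) N := by
            intro i hi
            simp only [Finset.mem_filter, Finset.mem_range] at hi
            simp only [Finset.mem_Ico]
            omega
          calc ((Finset.range N).filter (fun i => N - i ≤ N₀)).card
              ≤ (Finset.Ico (N - N₀) N).card := Finset.card_le_card hsubs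
            _ = N - (N - N₀) := Nat.card_Ico _ _
            _ ≤ N₀ := by omega
        calc ∑ i ∈ Finset.range N, ∫⁻ z, ENNReal.ofReal (Hr (N - i) z) ∂μ
            ≤ ∑ i ∈ Finset.range N, ((if N - i ≤ N₀ then I1 else 0) + ENNReal.ofReal ε) :=
              Finset.sum_le_sum fun i _ => hHrint (N - i)
          _ = (∑ i ∈ Finset.range N, (if N - i ≤ N₀ then I1 else 0))
              + (N : ENNReal) * ENNReal.ofReal ε := by
              rw [Finset.sum_add_distrib, Finset.sum_const, Finset.card_range, nsmul_eq_mul]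
          _ ≤ (N₀ : ENNReal) * I1 + (N : ENNReal) * ENNReal.ofReal ε := by
              apply add_le_add_left
              rw [← Finset.sum_filter, Finset.sum_const, nsmul_eq_mul]
              exact mul_le_mul_left (by exact_mod_cast Nat.cast_le.2 hcardle) I1
      calc ∫⁻ x, ENNReal.ofReal (f N x) ∂μ
          ≤ ENNReal.ofReal ((α + ε) * N)
            + ∑ i ∈ Finset.range N, ∫⁻ x, ENNReal.ofReal (Hr (N - i) (T^[i] x)) ∂μ :=
            step1.trans (le_of_eq step2)
        _ = ENNReal.ofReal ((α + ε) * N)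
            + ∑ i ∈ Finset.range N, ∫⁻ z, ENNReal.ofReal (Hr (N - i) z) ∂μ := by
            congr 1
            exact Finset.sum_congr rfl fun i _ => step3 i
        _ ≤ ENNReal.ofReal ((α + ε) * N)
            + ((N₀ : ENNReal) * I1 + (N : ENNReal) * ENNReal.ofReal ε) := by
            exact add_le_add_right step4 _
        _ = _ := by ring
    set I1r := I1.toReal with hI1rdef
    have hI1rnn : 0 ≤ I1r := ENNReal.toReal_nonneg
    have hconv : ∀ N : ℕ, (∫ x, f N x ∂μ) ≤ (α + ε) * N + N₀ * I1r + N * ε := by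
      intro N
      have h1 := hmain N
      have h2 : ENNReal.ofReal ((α + ε) * N) + (N₀ : ENNReal) * I1
            + (N : ENNReal) * ENNReal.ofReal ε
          = ENNReal.ofReal ((α + ε) * N + N₀ * I1r + N * ε) := by
        rw [ENNReal.ofReal_add (by positivity) (by positivity),
          ENNReal.ofReal_add (by positivity) (mul_nonneg (Nat.cast_nonneg _) hI1rnn)]
        congr 2
        · rw [ENNReal.ofReal_mul (Nat.cast_nonneg _), ENNReal.ofReal_natCast,
            hI1rdef, ENNReal.ofReal_toReal hI1fin]
        · rw [ENNReal.ofReal_mul (Nat.cast_nonneg _), ENNReal.ofReal_natCast]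
      rw [h2] at h1
      exact (ENNReal.ofReal_le_ofReal_iff (by positivity)).1 h1
    have hdiv : ∀ᶠ N : ℕ in atTop,
        (∫ x, f N x ∂μ) / N ≤ (α + 2 * ε) + (N₀ * I1r) / N := by
      filter_upwards [eventually_ge_atTop 1] with N hN
      have hNpos : (0:ℝ) < N := by exact_mod_cast hN
      have heq : ((α + ε) * N + N₀ * I1r + N * ε) / N = (α + 2 * ε) + (N₀ * I1r) / N := by
        field_simp
        ring
      calc (∫ x, f N x ∂μ) / N ≤ ((α + ε) * N + N₀ * I1r + N * ε) / N := by
            gcongr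
            exact hconv N
        _ = _ := heq
    have hRHS : Tendsto (fun N : ℕ => (α + 2 * ε) + (N₀ * I1r) / N) atTop
        (nhds ((α + 2 * ε) + 0)) :=
      tendsto_const_nhds.add (tendsto_const_div_atTop_nhds_zero_nat _)
    have hfin2 : A ≤ α + 2 * ε := by
      have h := le_of_tendsto_of_tendsto hA hRHS hdiv
      linarith
    linarith
  filter_upwards [hc] with x hx
  calc ENNReal.ofReal A ≤ c := hAc
    _ = L x := hx.symm


/-- Exact invariance of the limsup of Birkhoff averages (values in `ℝ≥0∞`). -/
lemma limsup_avg_invariant {g : X → ℝ} (hnn : ∀ x, 0 ≤ g x) (x : X) :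
    atTop.limsup (fun n => ENNReal.ofReal (bS T g n (T x) / n))
      = atTop.limsup (fun n => ENNReal.ofReal (bS T g n x / n)) := by
  set Λ : X → ENNReal := fun z => atTop.limsup (fun n => ENNReal.ofReal (bS T g n z / n))
    with hΛ
  have hconv : ∀ z n, 1 ≤ n → ∀ q : ℚ, 0 ≤ (q:ℝ) →
      ENNReal.ofReal (q:ℝ) < ENNReal.ofReal (bS T g n z / n) → (q:ℝ) * n < bS T g n z := by
    intro z n hn q hq h
    have hnpos : (0:ℝ) < n := by exact_mod_cast hn
    have hlt : (q:ℝ) < bS T g n z / n := by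
      by_contra hge
      push_neg at hge
      exact absurd (ENNReal.ofReal_le_ofReal hge) (not_le.2 h)
    rw [lt_div_iff₀ hnpos] at hlt
    exact hlt
  apply le_antisymm
  · -- Λ (T x) ≤ Λ x
    by_contra hcon
    push_neg at hcon
    obtain ⟨q1, q2, hq1nn, hq12, hlt1, hlt2⟩ := exists_two_rat_btwn hcon
    have hfr : ∃ᶠ n in atTop, ENNReal.ofReal (q2:ℝ) < ENNReal.ofReal (bS T g n (T x) / n) :=
      frequently_lt_of_lt_limsup (h := hlt2)
    have hev : ∀ᶠ n : ℕ in atTop, (q1:ℝ) * (n + 1) ≤ (q2:ℝ) * n := by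
      have h1 : Tendsto (fun n : ℕ => ((q2:ℝ) - q1) * n) atTop atTop := by
        apply Tendsto.const_mul_atTop (by linarith : (0:ℝ) < (q2:ℝ) - q1)
        exact tendsto_natCast_atTop_atTop
      filter_upwards [h1.eventually_ge_atTop (q1:ℝ)] with n hn
      nlinarith
    have hfr2 : ∃ᶠ n in atTop,
        ENNReal.ofReal (q1:ℝ) ≤ ENNReal.ofReal (bS T g (n + 1) x / (n + 1)) := by
      refine ((hfr.and_eventually (eventually_ge_atTop 1)).and_eventually hev).mono ?_
      rintro n ⟨⟨h1, h2⟩, h3⟩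
      have hq2nn : (0:ℝ) ≤ (q2:ℝ) := by linarith
      have hbs := hconv (T x) n h2 q2 hq2nn h1
      have hstep : bS T g (n + 1) x = g x + bS T g n (T x) := bS_succ_left T g n x
      have hge : (q1:ℝ) * (n + 1) ≤ bS T g (n + 1) x := by
        have := hnn x
        nlinarith
      apply ENNReal.ofReal_le_ofReal
      have hpos : (0:ℝ) < (n:ℝ) + 1 := by positivity
      rw [le_div_iff₀ hpos]
      exact_mod_cast hge
    have hfr3 : ∃ᶠ n in atTop,
        ENNReal.ofReal (q1:ℝ) ≤ ENNReal.ofReal (bS T g n x / n) := by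
      apply frequently_of_succ
        (p := fun n => ENNReal.ofReal (q1:ℝ) ≤ ENNReal.ofReal (bS T g n x / n))
      exact_mod_cast hfr2
    exact absurd (le_limsup_of_frequently_le hfr3) (not_le.2 hlt1)
  · -- Λ x ≤ Λ (T x)
    by_contra hcon
    push_neg at hcon
    obtain ⟨q1, q2, hq1nn, hq12, hlt1, hlt2⟩ := exists_two_rat_btwn hcon
    have hfr : ∃ᶠ n in atTop, ENNReal.ofReal (q2:ℝ) < ENNReal.ofReal (bS T g n x / n) :=
      frequently_lt_of_lt_limsup (h := hlt2)
    have hev : ∀ᶠ n : ℕ in atTop, g x + (q1:ℝ) * (n - 1) ≤ (q2:ℝ) * n := by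
      have h1 : Tendsto (fun n : ℕ => ((q2:ℝ) - q1) * n) atTop atTop := by
        apply Tendsto.const_mul_atTop (by linarith : (0:ℝ) < (q2:ℝ) - q1)
        exact tendsto_natCast_atTop_atTop
      filter_upwards [h1.eventually_ge_atTop (g x - (q1:ℝ))] with n hn
      nlinarith
    have hfr2 : ∃ᶠ n in atTop,
        ENNReal.ofReal (q1:ℝ) ≤ ENNReal.ofReal (bS T g (n - 1) (T x) / ((n - 1 : ℕ) : ℝ)) := by
      refine ((hfr.and_eventually (eventually_ge_atTop 2)).and_eventually hev).mono ?_
      rintro n ⟨⟨h1, h2⟩, h3⟩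
      have hq2nn : (0:ℝ) ≤ (q2:ℝ) := by linarith
      have hbs := hconv x n (by omega) q2 hq2nn h1
      obtain ⟨m, rfl⟩ : ∃ m, n = m + 1 := ⟨n - 1, by omega⟩
      have hstep : bS T g (m + 1) x = g x + bS T g m (T x) := bS_succ_left T g m x
      have hcast : ((m + 1 : ℕ) : ℝ) = (m : ℝ) + 1 := by push_cast; ring
      have hcast2 : ((m + 1 : ℕ) : ℝ) - 1 = (m : ℝ) := by push_cast; ring
      rw [hcast2] at h3
      have hge : (q1:ℝ) * m ≤ bS T g m (T x) := by
        rw [hcast] at hbs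
        nlinarith
      apply ENNReal.ofReal_le_ofReal
      have hm : 0 < m := by omega
      have hpos : (0:ℝ) < (m:ℝ) := by exact_mod_cast hm
      simp only [Nat.add_sub_cancel]
      rw [le_div_iff₀ hpos]
      exact hge

    have hfr3 : ∃ᶠ n in atTop,
        ENNReal.ofReal (q1:ℝ) ≤ ENNReal.ofReal (bS T g n (T x) / n) :=
      (tendsto_sub_atTop_nat 1).frequently hfr2
    exact absurd (le_limsup_of_frequently_le hfr3) (not_le.2 hlt1)

/-- Half of Birkhoff's theorem: a.e. upper bound for the limsup of averages. -/
lemma birkhoff_limsup_le [IsProbabilityMeasure μ] (hT : Ergodic T μ) {g : X → ℝ}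
    (hgm : Measurable g) (hnn : ∀ x, 0 ≤ g x) (hint : Integrable g μ) :
    ∀ᵐ x ∂μ, atTop.limsup (fun n => ENNReal.ofReal (bS T g n x / n))
      ≤ ENNReal.ofReal (∫ x, g x ∂μ) := by
  have hTm := hT.toMeasurePreserving
  set Λ : X → ENNReal := fun z => atTop.limsup (fun n => ENNReal.ofReal (bS T g n z / n))
    with hΛ
  have hmeas : Measurable Λ := Measurable.limsup fun n =>
    ENNReal.measurable_ofReal.comp ((bS_measurable hTm.measurable hgm n).div_const _)
  have hinv : (fun x => Λ (T x)) =ᵐ[μ] Λ :=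
    Eventually.of_forall fun x => limsup_avg_invariant hnn x
  obtain ⟨c, hc⟩ := hT.ae_eq_const_of_ae_eq_comp₀ hmeas.nullMeasurable hinv
  have hgint : (0:ℝ) ≤ ∫ x, g x ∂μ := integral_nonneg hnn
  suffices hcle : c ≤ ENNReal.ofReal (∫ x, g x ∂μ) by
    filter_upwards [hc] with x hx
    calc Λ x = c := hx
      _ ≤ _ := hcle
  by_contra hcon
  push_neg at hcon
  obtain ⟨q, hqnn, hq1, hq2⟩ := ENNReal.lt_iff_exists_rat_btwn.1 hcon
  rw [ofReal_rat_eq] at hq1 hq2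
  have hq0 : (0:ℝ) ≤ (q:ℝ) := by exact_mod_cast hqnn
  have hgq : ∫ x, g x ∂μ < q := by
    by_contra hge
    push_neg at hge
    exact absurd (ENNReal.ofReal_le_ofReal hge) (not_le.2 hq1)
  set gq : X → ℝ := fun x => g x - q with hgqdef
  have hgqm : Measurable gq := hgm.sub measurable_const
  have hgqint : Integrable gq μ := hint.sub (integrable_const _)
  have hbSq : ∀ n x, bS T gq n x = bS T g n x - n * q := by
    intro n x
    simp only [bS, hgqdef]
    rw [Finset.sum_sub_distrib, Finset.sum_const, Finset.card_range, nsmul_eq_mul]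
  set En : ℕ → Set X := fun N => {x | 0 < mS T gq N x} with hEndef
  have hEms : ∀ N, MeasurableSet (En N) := fun N =>
    measurableSet_lt measurable_const (mS_measurable hTm.measurable hgqm N)
  have hEmono : Monotone En := by
    intro N M hNM x hx
    have : ∀ k, mS T gq N x ≤ mS T gq (N + k) x := by
      intro k
      induction k with
      | zero => exact le_rfl
      | succ k ih => exact ih.trans (mS_mono T gq (N + k) x)
    have h := this (M - N)
    rw [Nat.add_sub_cancel' hNM] at h
    exact lt_of_lt_of_le hx h
  have hmem : ∀ᵐ x ∂μ, x ∈ ⋃ N, En N := by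
    filter_upwards [hc] with x hx
    have hlt : ENNReal.ofReal (q:ℝ) < Λ x := by rw [hx]; exact hq2
    have hfr : ∃ᶠ n in atTop, ENNReal.ofReal (q:ℝ) < ENNReal.ofReal (bS T g n x / n) :=
      frequently_lt_of_lt_limsup (h := hlt)
    obtain ⟨n, h1, h2⟩ := (hfr.and_eventually (eventually_ge_atTop 1)).exists
    have hnpos : (0:ℝ) < n := by exact_mod_cast h2
    have hlt2 : (q:ℝ) < bS T g n x / n := by
      by_contra hge
      push_neg at hge
      exact absurd (ENNReal.ofReal_le_ofReal hge) (not_le.2 h1)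
    rw [lt_div_iff₀ hnpos] at hlt2
    have hpos : 0 < bS T gq n x := by
      rw [hbSq]
      nlinarith
    exact Set.mem_iUnion.2 ⟨n, lt_of_lt_of_le hpos (bS_le_mS T gq le_rfl x)⟩
  have hU : (⋃ N, En N) =ᵐ[μ] (Set.univ : Set X) := by
    rw [ae_eq_univ]
    exact measure_eq_zero_iff_ae_notMem.2 (by filter_upwards [hmem] with x hx using not_not.2 hx)
  have htend : Tendsto (fun N => ∫ x in En N, gq x ∂μ) atTop
      (nhds (∫ x in ⋃ N, En N, gq x ∂μ)) :=
    tendsto_setIntegral_of_monotone hEms hEmono hgqint.integrableOn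
  have hlim : ∫ x in ⋃ N, En N, gq x ∂μ = ∫ x, gq x ∂μ := by
    rw [setIntegral_congr_set hU, setIntegral_univ]
  have h0 : ∀ N, 0 ≤ ∫ x in En N, gq x ∂μ := fun N => garsia hTm hgqm hgqint N
  have hge0 : 0 ≤ ∫ x, gq x ∂μ := hlim ▸ ge_of_tendsto' htend h0
  have hval : ∫ x, gq x ∂μ = (∫ x, g x ∂μ) - q := by
    rw [hgqdef]
    rw [integral_sub hint (integrable_const _), integral_const]
    simp
  rw [hval] at hge0
  linarith

lemma tendsto_real_of_enn {u : ℕ → ℝ} (hnn : ∀ n, 0 ≤ u n) {c : ℝ} (hc : 0 ≤ c)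
    (hlo : ENNReal.ofReal c ≤ atTop.liminf fun n => ENNReal.ofReal (u n))
    (hhi : atTop.limsup (fun n => ENNReal.ofReal (u n)) ≤ ENNReal.ofReal c) :
    Tendsto u atTop (nhds c) := by
  have hll : atTop.liminf (fun n => ENNReal.ofReal (u n))
      ≤ atTop.limsup (fun n => ENNReal.ofReal (u n)) := liminf_le_limsup
  have h1 : atTop.liminf (fun n => ENNReal.ofReal (u n)) = ENNReal.ofReal c :=
    le_antisymm (hll.trans hhi) hlo
  have h2 : atTop.limsup (fun n => ENNReal.ofReal (u n)) = ENNReal.ofReal c :=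
    le_antisymm hhi (hlo.trans hll)
  have h3 : Tendsto (fun n => ENNReal.ofReal (u n)) atTop (nhds (ENNReal.ofReal c)) :=
    tendsto_of_liminf_eq_limsup h1 h2
  have h4 := (ENNReal.tendsto_toReal ENNReal.ofReal_ne_top).comp h3
  have h5 : (fun n => (ENNReal.ofReal (u n)).toReal) = u :=
    funext fun n => ENNReal.toReal_ofReal (hnn n)
  have h6 : Tendsto (fun n => (ENNReal.ofReal (u n)).toReal) atTop
      (nhds (ENNReal.ofReal c).toReal) := h4
  rw [h5, ENNReal.toReal_ofReal hc] at h6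
  exact h6

/-- Birkhoff's pointwise ergodic theorem for nonnegative integrable functions. -/
lemma birkhoff_ae_tendsto [IsProbabilityMeasure μ] (hT : Ergodic T μ) {g : X → ℝ}
    (hgm : Measurable g) (hnn : ∀ x, 0 ≤ g x) (hint : Integrable g μ) :
    ∀ᵐ x ∂μ, Tendsto (fun n => bS T g n x / n) atTop (nhds (∫ x, g x ∂μ)) := by
  have hTm := hT.toMeasurePreserving
  have hint1 : Integrable (fun x => bS T g 1 x) μ := by
    have : (fun x => bS T g 1 x) = g := funext fun x => bS_one T g x
    rw [this]; exact hint
  have hA : Tendsto (fun n : ℕ => (∫ x, bS T g n x ∂μ) / n) atTop (nhds (∫ x, g x ∂μ)) := by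
    have hev : (fun n : ℕ => (∫ x, bS T g n x ∂μ) / n) =ᶠ[atTop] fun _ => ∫ x, g x ∂μ := by
      filter_upwards [eventually_ge_atTop 1] with n hn
      have hnne : (n:ℝ) ≠ 0 := by positivity
      rw [bS_integral hTm hgm hint n, mul_comm, mul_div_assoc, div_self hnne, mul_one]
    exact Tendsto.congr' hev.symm tendsto_const_nhds
  have hlower := kingman_liminf_lower hT (f := fun n x => bS T g n x)
    (fun x => bS_zero T g x) (fun n x => bS_nonneg T hnn n x)
    (fun m n x => le_of_eq (bS_add T g m n x))
    (fun n => bS_measurable hTm.measurable hgm n) hint1 hA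
  have hupper := birkhoff_limsup_le hT hgm hnn hint
  filter_upwards [hlower, hupper] with x hx1 hx2
  exact tendsto_real_of_enn
    (fun n => div_nonneg (bS_nonneg T hnn n x) (Nat.cast_nonneg n))
    (integral_nonneg hnn) hx1 hx2

lemma le_bS {f : ℕ → X → ℝ} (hf0 : ∀ x, f 0 x = 0)
    (hsub : ∀ m n x, f (m + n) x ≤ f m x + f n (T^[m] x)) :
    ∀ n x, f n x ≤ bS T (f 1) n x := by
  intro n
  induction n with
  | zero => intro x; rw [hf0 x, bS_zero]
  | succ n ih =>
    intro x
    have h1 := hsub n 1 x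
    have h2 : bS T (f 1) (n + 1) x = bS T (f 1) n x + f 1 (T^[n] x) := by
      rw [bS_add T (f 1) n 1 x, bS_one]
    rw [h2]
    exact h1.trans (add_le_add (ih x) le_rfl)

lemma block_helper {f : ℕ → X → ℝ}
    (hsub : ∀ m n x, f (m + n) x ≤ f m x + f n (T^[m] x)) (m : ℕ) :
    ∀ q s (z : X), f (q * m + s) z
      ≤ (∑ k ∈ Finset.range q, f m (T^[k * m] z)) + f s (T^[q * m] z) := by
  intro q
  induction q with
  | zero => intro s z; simp
  | succ q ih =>
    intro s z
    have e1 : (q + 1) * m + s = m + (q * m + s) := by ring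
    rw [e1]
    have hco : ∀ k, T^[k * m] (T^[m] z) = T^[(k + 1) * m] z := by
      intro k
      rw [← Function.iterate_add_apply]
      congr 1
      ring
    calc f (m + (q * m + s)) z ≤ f m z + f (q * m + s) (T^[m] z) := hsub m _ z
      _ ≤ f m z + ((∑ k ∈ Finset.range q, f m (T^[k * m] (T^[m] z)))
          + f s (T^[q * m] (T^[m] z))) := by
          exact add_le_add_right (ih s (T^[m] z)) _
      _ = (∑ k ∈ Finset.range (q + 1), f m (T^[k * m] z)) + f s (T^[(q + 1) * m] z) := by
          rw [Finset.sum_range_succ']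
          simp only [hco, Nat.zero_mul, Function.iterate_zero_apply]
          ring
  
lemma block_decomp {f : ℕ → X → ℝ} (hf0 : ∀ x, f 0 x = 0) (hnn : ∀ n x, 0 ≤ f n x)
    (hsub : ∀ m n x, f (m + n) x ≤ f m x + f n (T^[m] x))
    {m : ℕ} (hm : 1 ≤ m) {n : ℕ} (hn : m ≤ n) (x : X) :
    (m:ℝ) * f n x ≤ (∑ j ∈ Finset.range n, f m (T^[j] x))
      + m * (∑ i ∈ Finset.range m, f 1 (T^[i] x))
      + m * (∑ i ∈ Finset.Ico (n - m) n, f 1 (T^[i] x)) := by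
  have hper : ∀ r, r < m →
      f n x ≤ (∑ j ∈ (Finset.range n).filter (fun j => j % m = r), f m (T^[j] x))
        + ((∑ i ∈ Finset.range m, f 1 (T^[i] x))
        + (∑ i ∈ Finset.Ico (n - m) n, f 1 (T^[i] x))) := by
    intro r hr
    have hrn : r ≤ n := (le_of_lt hr).trans hn
    obtain ⟨q, s, hsm, hqs⟩ : ∃ q s, s < m ∧ q * m + s = n - r :=
      ⟨(n - r) / m, (n - r) % m, Nat.mod_lt _ hm, by rw [mul_comm]; exact Nat.div_add_mod _ m⟩
    have h1 : f n x ≤ f r x + f (n - r) (T^[r] x) := by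
      have h := hsub r (n - r) x
      rwa [Nat.add_sub_cancel' hrn] at h
    have h2 := block_helper hsub m q s (T^[r] x)
    rw [hqs] at h2
    -- bound the first boundary term
    have hb1 : f r x ≤ ∑ i ∈ Finset.range m, f 1 (T^[i] x) := by
      calc f r x ≤ bS T (f 1) r x := le_bS hf0 hsub r x
        _ ≤ ∑ i ∈ Finset.range m, f 1 (T^[i] x) := by
            refine Finset.sum_le_sum_of_subset_of_nonneg
              (Finset.range_subset_range.2 (le_of_lt hr)) ?_
            intro i _ _
            exact hnn 1 _
    -- bound the middle term
    have hqmn : q * m ≤ n - r := by omega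
    have hmid : ∑ k ∈ Finset.range q, f m (T^[k * m] (T^[r] x))
        ≤ ∑ j ∈ (Finset.range n).filter (fun j => j % m = r), f m (T^[j] x) := by
      have hco : ∀ k, T^[k * m] (T^[r] x) = T^[r + k * m] x := by
        intro k
        rw [add_comm r (k * m), Function.iterate_add_apply]
      have hinj : Set.InjOn (fun k => r + k * m) (Finset.range q) := by
        intro a _ b _ hab
        simp only at hab
        have : a * m = b * m := by omega
        exact Nat.eq_of_mul_eq_mul_right hm this
      calc ∑ k ∈ Finset.range q, f m (T^[k * m] (T^[r] x))
          = ∑ j ∈ (Finset.range q).image (fun k => r + k * m), f m (T^[j] x) := by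
            rw [Finset.sum_image (fun a ha b hb hab => hinj ha hb hab)]
            exact Finset.sum_congr rfl fun k _ => by rw [hco k]
        _ ≤ ∑ j ∈ (Finset.range n).filter (fun j => j % m = r), f m (T^[j] x) := by
            refine Finset.sum_le_sum_of_subset_of_nonneg ?_ (fun j _ _ => hnn m _)
            intro j hj
            obtain ⟨k, hk, rfl⟩ := Finset.mem_image.1 hj
            have hkq : k < q := Finset.mem_range.1 hk
            have he1 : (k + 1) * m ≤ q * m :=
              mul_le_mul_left (Nat.succ_le_of_lt hkq) m
            have he2 : (k + 1) * m = k * m + m := by ring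
            have hjlt : r + k * m < n := by omega
            refine Finset.mem_filter.2 ⟨Finset.mem_range.2 hjlt, ?_⟩
            rw [Nat.add_mul_mod_self_right]
            exact Nat.mod_eq_of_lt hr
    -- bound the last boundary term
    have hb2 : f s (T^[q * m] (T^[r] x)) ≤ ∑ i ∈ Finset.Ico (n - m) n, f 1 (T^[i] x) := by
      have hco : T^[q * m] (T^[r] x) = T^[r + q * m] x := by
        rw [add_comm r (q * m), Function.iterate_add_apply]
      calc f s (T^[q * m] (T^[r] x)) ≤ bS T (f 1) s (T^[q * m] (T^[r] x)) :=
            le_bS hf0 hsub s _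
        _ = ∑ i ∈ Finset.range s, f 1 (T^[r + q * m + i] x) := by
            rw [hco]
            refine Finset.sum_congr rfl fun i _ => ?_
            rw [← Function.iterate_add_apply]
            have hix : i + (r + q * m) = r + q * m + i := by omega
            rw [hix]
        _ = ∑ j ∈ Finset.Ico (r + q * m) (r + q * m + s), f 1 (T^[j] x) := by
            rw [Finset.sum_Ico_eq_sum_range]
            simp
        _ ≤ ∑ i ∈ Finset.Ico (n - m) n, f 1 (T^[i] x) := by
            refine Finset.sum_le_sum_of_subset_of_nonneg ?_ (fun j _ _ => hnn 1 _)
            have he : r + q * m + s = n := by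
              rw [add_assoc, hqs]
              omega
            intro j hj
            rw [Finset.mem_Ico] at hj ⊢
            omega
    calc f n x ≤ f r x + f (n - r) (T^[r] x) := h1
      _ ≤ f r x + ((∑ k ∈ Finset.range q, f m (T^[k * m] (T^[r] x)))
          + f s (T^[q * m] (T^[r] x))) := add_le_add_right h2 _
      _ ≤ (∑ j ∈ (Finset.range n).filter (fun j => j % m = r), f m (T^[j] x))
          + ((∑ i ∈ Finset.range m, f 1 (T^[i] x))
          + (∑ i ∈ Finset.Ico (n - m) n, f 1 (T^[i] x))) := by
          linarith [hb1, hmid, hb2]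
  have hfib : ∑ r ∈ Finset.range m,
      ∑ j ∈ (Finset.range n).filter (fun j => j % m = r), f m (T^[j] x)
      = ∑ j ∈ Finset.range n, f m (T^[j] x) :=
    Finset.sum_fiberwise_of_maps_to (fun j _ => Finset.mem_range.2 (Nat.mod_lt _ hm)) _
  calc (m:ℝ) * f n x = ∑ _r ∈ Finset.range m, f n x := by
        rw [Finset.sum_const, Finset.card_range, nsmul_eq_mul]
    _ ≤ ∑ r ∈ Finset.range m,
        ((∑ j ∈ (Finset.range n).filter (fun j => j % m = r), f m (T^[j] x))
          + ((∑ i ∈ Finset.range m, f 1 (T^[i] x))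
          + (∑ i ∈ Finset.Ico (n - m) n, f 1 (T^[i] x)))) :=
        Finset.sum_le_sum fun r hr => hper r (Finset.mem_range.1 hr)
    _ = (∑ j ∈ Finset.range n, f m (T^[j] x))
        + m * (∑ i ∈ Finset.range m, f 1 (T^[i] x))
        + m * (∑ i ∈ Finset.Ico (n - m) n, f 1 (T^[i] x)) := by
        rw [Finset.sum_add_distrib, hfib, Finset.sum_const, Finset.card_range, nsmul_eq_mul]
        ring

lemma kingman_limsup_upper [IsProbabilityMeasure μ] (hT : Ergodic T μ) {f : ℕ → X → ℝ}
    (hf0 : ∀ x, f 0 x = 0) (hnn : ∀ n x, 0 ≤ f n x)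
    (hsub : ∀ m n x, f (m + n) x ≤ f m x + f n (T^[m] x))
    (hfm : ∀ n, Measurable (f n)) (hint : Integrable (f 1) μ)
    {A : ℝ} (hA : Tendsto (fun n : ℕ => (∫ x, f n x ∂μ) / n) atTop (nhds A)) :
    ∀ᵐ x ∂μ, atTop.limsup (fun n => ENNReal.ofReal (f n x / n)) ≤ ENNReal.ofReal A := by
  have hTm := hT.toMeasurePreserving
  have hfint : ∀ n, Integrable (f n) μ := by
    intro n
    refine Integrable.mono' (bS_integrable hTm (hfm 1) hint n) (hfm n).aestronglyMeasurable ?_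
    exact Eventually.of_forall fun x => by
      rw [Real.norm_of_nonneg (hnn n x)]
      exact le_bS hf0 hsub n x
  have hbk : ∀ m : ℕ, ∀ᵐ x ∂μ,
      Tendsto (fun n => bS T (f m) n x / n) atTop (nhds (∫ x, f m x ∂μ)) :=
    fun m => birkhoff_ae_tendsto hT (hfm m) (hnn m) (hfint m)
  have hmain : ∀ᵐ x ∂μ, ∀ m : ℕ, 1 ≤ m →
      atTop.limsup (fun n => ENNReal.ofReal (f n x / n))
        ≤ ENNReal.ofReal ((∫ x, f m x ∂μ) / m) := by
    rw [ae_all_iff]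
    intro m
    by_cases hm : 1 ≤ m
    swap
    · exact Eventually.of_forall fun x h => absurd h hm
    filter_upwards [hbk m, hbk 1] with x hx1 hx2
    intro _
    have hm0 : (0:ℝ) < m := by exact_mod_cast hm
    set um := ∫ x, f m x ∂μ with humdef
    set u1 := ∫ x, f 1 x ∂μ with hu1def
    set B1 : ℝ := ∑ i ∈ Finset.range m, f 1 (T^[i] x) with hB1def
    set R : ℕ → ℝ := fun n => (bS T (f m) n x / n) / m + B1 / n
        + (bS T (f 1) n x - bS T (f 1) (n - m) x) / n with hRdef
    -- eventual pointwise bound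
    have hRle : ∀ᶠ n in atTop, f n x / n ≤ R n := by
      filter_upwards [eventually_ge_atTop m, eventually_ge_atTop 1] with n hnm hn1
      have hn0 : (0:ℝ) < n := by exact_mod_cast hn1
      have hd := block_decomp hf0 hnn hsub hm hnm x
      have hIco : ∑ i ∈ Finset.Ico (n - m) n, f 1 (T^[i] x)
          = bS T (f 1) n x - bS T (f 1) (n - m) x := by
        have hsplit : bS T (f 1) (n - m) x + ∑ i ∈ Finset.Ico (n - m) n, f 1 (T^[i] x)
            = bS T (f 1) n x := by
          simp only [bS]
          rw [Finset.range_eq_Ico, Finset.range_eq_Ico]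
          exact Finset.sum_Ico_consecutive (fun i => f 1 (T^[i] x)) (Nat.zero_le (n - m)) (by omega : n - m ≤ n)
        linarith
      rw [hIco] at hd
      have hbSd : ∑ j ∈ Finset.range n, f m (T^[j] x) = bS T (f m) n x := rfl
      rw [hbSd] at hd
      show f n x / n ≤ bS T (f m) n x / n / m + B1 / n
          + (bS T (f 1) n x - bS T (f 1) (n - m) x) / n
      set B2 : ℝ := bS T (f 1) n x - bS T (f 1) (n - m) x with hB2def
      have h1 : f n x ≤ (bS T (f m) n x + m * B1 + m * B2) / m := by
        rw [le_div_iff₀ hm0]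
        linarith
      have h3 : ((bS T (f m) n x + m * B1 + m * B2) / m) / n
          = (bS T (f m) n x / n) / m + B1 / n + B2 / n := by
        field_simp
      calc f n x / n ≤ ((bS T (f m) n x + m * B1 + m * B2) / m) / n := by
            gcongr
        _ = _ := h3
    -- limit of the right-hand side
    have ht1 : Tendsto (fun n => (bS T (f m) n x / n) / m) atTop (nhds (um / m)) :=
      hx1.div_const m
    have ht2 : Tendsto (fun n : ℕ => B1 / n) atTop (nhds 0) :=
      tendsto_const_div_atTop_nhds_zero_nat B1
    have ht3 : Tendsto (fun n : ℕ => (bS T (f 1) n x - bS T (f 1) (n - m) x) / n) atTop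
        (nhds 0) := by
      have ha : Tendsto (fun n : ℕ => bS T (f 1) n x / n) atTop (nhds u1) := hx2
      have hb : Tendsto (fun n : ℕ => bS T (f 1) (n - m) x / ((n - m : ℕ) : ℝ)) atTop
          (nhds u1) := ha.comp (tendsto_sub_atTop_nat m)
      have hc : Tendsto (fun n : ℕ => ((n - m : ℕ) : ℝ) / n) atTop (nhds 1) := by
        have hone : Tendsto (fun n : ℕ => 1 - (m : ℝ) / n) atTop (nhds (1 - 0)) :=
          tendsto_const_nhds.sub (tendsto_const_div_atTop_nhds_zero_nat _)
        rw [sub_zero] at hone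
        refine hone.congr' ?_
        filter_upwards [eventually_ge_atTop m, eventually_ge_atTop 1] with n hnm hn1
        have hn0 : (0:ℝ) < n := by exact_mod_cast hn1
        rw [Nat.cast_sub hnm]
        field_simp
      have hcomb := ha.sub (hc.mul hb)
      rw [one_mul, sub_self] at hcomb
      refine hcomb.congr' ?_
      filter_upwards [eventually_ge_atTop (m + 1)] with n hnm
      have hn0 : (0:ℝ) < n := by
        have : (1:ℕ) ≤ n := by omega
        exact_mod_cast this
      have hnm0 : (0:ℝ) < ((n - m : ℕ) : ℝ) := by
        have : (1:ℕ) ≤ n - m := by omega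
        exact_mod_cast this
      field_simp
    have hRtend : Tendsto R atTop (nhds (um / m)) := by
      have := (ht1.add ht2).add ht3
      rw [add_zero, add_zero] at this
      exact this
    have hRenn : Tendsto (fun n => ENNReal.ofReal (R n)) atTop
        (nhds (ENNReal.ofReal (um / m))) := ENNReal.tendsto_ofReal hRtend
    have hlimsupR : atTop.limsup (fun n => ENNReal.ofReal (R n))
        = ENNReal.ofReal (um / m) := hRenn.limsup_eq
    have hmono : atTop.limsup (fun n => ENNReal.ofReal (f n x / n))
        ≤ atTop.limsup (fun n => ENNReal.ofReal (R n)) :=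
      limsup_le_limsup (hRle.mono fun n h => ENNReal.ofReal_le_ofReal h)
    exact hmono.trans (le_of_eq hlimsupR)
  filter_upwards [hmain] with x hx
  have htendA : Tendsto (fun m : ℕ => ENNReal.ofReal ((∫ x, f m x ∂μ) / m)) atTop
      (nhds (ENNReal.ofReal A)) := ENNReal.tendsto_ofReal hA
  exact ge_of_tendsto htendA (by
    filter_upwards [eventually_ge_atTop 1] with m hm using hx m hm)

/-- Kingman's subadditive ergodic theorem (ergodic case, nonnegative cocycle). -/
theorem kingman [IsProbabilityMeasure μ] (hT : Ergodic T μ) {f : ℕ → X → ℝ}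
    (hf0 : ∀ x, f 0 x = 0) (hnn : ∀ n x, 0 ≤ f n x)
    (hsub : ∀ m n x, f (m + n) x ≤ f m x + f n (T^[m] x))
    (hfm : ∀ n, Measurable (f n)) (hint : Integrable (f 1) μ)
    {A : ℝ} (hA : Tendsto (fun n : ℕ => (∫ x, f n x ∂μ) / n) atTop (nhds A)) :
    ∀ᵐ x ∂μ, Tendsto (fun n : ℕ => f n x / n) atTop (nhds A) := by
  have hA0 : 0 ≤ A :=
    ge_of_tendsto hA (Eventually.of_forall fun n =>
      div_nonneg (integral_nonneg (hnn n)) (Nat.cast_nonneg n))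
  filter_upwards [kingman_liminf_lower hT hf0 hnn hsub hfm hint hA,
    kingman_limsup_upper hT hf0 hnn hsub hfm hint hA] with x h1 h2
  exact tendsto_real_of_enn (fun n => div_nonneg (hnn n x) (Nat.cast_nonneg n)) hA0 h1 h2

end KingmanAux

/-- In the cocycle setting with `T` ergodic, for almost every `x`,
`lim_n d(y, aₙ(x)y)/n = A` (a consequence of Kingman's subadditive ergodic theorem). -/
theorem ae_pointwise_limit
    {Y : Type*} [MetricSpace Y]
    {X : Type*} [MeasurableSpace X] (μ : Measure X) [IsProbabilityMeasure μ]
    (T : X → X) (hT : Ergodic T μ)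
    (D : Set Y) (w : X → Y → Y)
    (hw : ∀ x, Set.MapsTo (w x) D D ∧ LipschitzOnWith 1 (w x) D)
    (y : Y) (hy : y ∈ D)
    (a : ℕ → X → Y → Y) (ha0 : ∀ x, a 0 x = id)
    (harec : ∀ n x, a (n + 1) x = w x ∘ a n (T x))
    (hmeas : ∀ n, Measurable fun x => dist y (a n x y))
    (hint : Integrable (fun x => dist y (a 1 x y)) μ)
    (A : ℝ)
    (hA : Tendsto (fun n : ℕ => (∫ x, dist y (a n x y) ∂μ) / n) atTop (nhds A)) :
    ∀ᵐ x ∂μ, Tendsto (fun n : ℕ => dist y (a n x y) / n) atTop (nhds A) := by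
  set f : ℕ → X → ℝ := fun n x => dist y (a n x y) with hfdef
  -- basic cocycle properties
  have hone : ∀ n x, Set.MapsTo (a n x) D D ∧ LipschitzOnWith 1 (a n x) D := by
    intro n
    induction n with
    | zero =>
      intro x
      rw [ha0 x]
      exact ⟨Set.mapsTo_id D, LipschitzWith.id.lipschitzOnWith⟩
    | succ n ih =>
      intro x
      rw [harec n x]
      constructor
      · exact ((hw x).1).comp ((ih (T x)).1)
      · have h := ((hw x).2).comp ((ih (T x)).2) ((ih (T x)).1)
        rwa [mul_one] at h
  have hcomp : ∀ m n x, a (m + n) x = a m x ∘ a n (T^[m] x) := by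
    intro m
    induction m with
    | zero =>
      intro n x
      simp only [Nat.zero_add, Function.iterate_zero, id_eq]
      rw [ha0 x]
      rfl
    | succ m ih =>
      intro n x
      have e1 : m + 1 + n = (m + n) + 1 := by ring
      rw [e1, harec (m + n) x, ih n (T x), harec m x]
      have e2 : T^[m] (T x) = T^[m + 1] x := (Function.iterate_succ_apply T m x).symm
      rw [e2]
      rfl
  have hf0 : ∀ x, f 0 x = 0 := by
    intro x
    rw [hfdef]
    simp [ha0 x]
  have hnn : ∀ n x, 0 ≤ f n x := fun n x => dist_nonneg
  have hsub : ∀ m n x, f (m + n) x ≤ f m x + f n (T^[m] x) := by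
    intro m n x
    have hz : a n (T^[m] x) y ∈ D := (hone n (T^[m] x)).1 hy
    have happ : f (m + n) x = dist y (a m x (a n (T^[m] x) y)) := by
      rw [hfdef]
      simp only
      rw [hcomp m n x]
      rfl
    rw [happ]
    have htri : dist y (a m x (a n (T^[m] x) y))
        ≤ dist y (a m x y) + dist (a m x y) (a m x (a n (T^[m] x) y)) :=
      dist_triangle _ _ _
    have hlip : dist (a m x y) (a m x (a n (T^[m] x) y))
        ≤ ((1 : NNReal) : ℝ) * dist y (a n (T^[m] x) y) :=
      (hone m x).2.dist_le_mul y hy _ hz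
    rw [NNReal.coe_one, one_mul] at hlip
    calc dist y (a m x (a n (T^[m] x) y))
        ≤ dist y (a m x y) + dist (a m x y) (a m x (a n (T^[m] x) y)) := htri
      _ ≤ dist y (a m x y) + dist y (a n (T^[m] x) y) := add_le_add_right hlip _
      _ = f m x + f n (T^[m] x) := rfl
  exact KingmanAux.kingman hT hf0 hnn hsub hmeas hint hA
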